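/- Let G be a disconnected graph with exactly one nontrivial connected component G_1 and t > 0 trivial components. If diam(G_1) > 3, then the geodetic hull number of the complementary prism equals exactly h(G\bar{G}) = t + 2. -/

import Mathlib

open SimpleGraph

/-- The geodetic closed interval `I[u,v]`: `u`, `v`, and all vertices lying on
some shortest `u`–`v` path. -/
def geoInterval {V : Type*} (G : SimpleGraph V) (u v : V) : Set V :=
  {w | w = u ∨ w = v ∨ (G.Reachable u v ∧ G.dist u w + G.dist w v = G.dist u v)}

/-- A set is geodetically convex if it is closed under intervals. -/
def IsGeoConvex {V : Type*} (G : SimpleGraph V) (S : Set V) : Prop :=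
  ∀ u ∈ S, ∀ v ∈ S, geoInterval G u v ⊆ S

/-- The geodetic convex hull: the smallest convex set containing `S`. -/
def geoHull {V : Type*} (G : SimpleGraph V) (S : Set V) : Set V :=
  ⋂₀ {T | IsGeoConvex G T ∧ S ⊆ T}

/-- `S` is a hull set if its convex hull is the whole vertex set. -/
def IsHullSet {V : Type*} (G : SimpleGraph V) (S : Set V) : Prop :=
  geoHull G S = Set.univ

/-- The geodetic hull number: minimum cardinality of a hull set. -/
noncomputable def hullNumber {V : Type*} (G : SimpleGraph V) : ℕ :=
  sInf {n | ∃ S : Set V, S.ncard = n ∧ IsHullSet G S}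

/-- A vertex is simplicial if its closed neighborhood induces a clique. -/
def IsSimplicial {V : Type*} (G : SimpleGraph V) (v : V) : Prop :=
  ∀ a ∈ G.neighborSet v, ∀ b ∈ G.neighborSet v, a ≠ b → G.Adj a b

/-- The complementary prism `G G̅`: disjoint union of `G` (left copies) and its
complement (right copies), plus a perfect matching between corresponding vertices. -/
def compPrism {V : Type*} (G : SimpleGraph V) : SimpleGraph (V ⊕ V) where
  Adj x y :=
    match x, y with
    | .inl u, .inl w => G.Adj u w
    | .inr u, .inr w => u ≠ w ∧ ¬ G.Adj u w
    | .inl u, .inr w => u = w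
    | .inr u, .inl w => u = w
  symm := by
    refine ⟨?_⟩
    rintro (u | u) (w | w) h
    · exact h.symm
    · exact h.symm
    · exact h.symm
    · exact ⟨h.1.symm, fun a => h.2 a.symm⟩
  loopless := by
    refine ⟨?_⟩
    rintro (u | u) h
    · exact G.irrefl h
    · exact h.1 rfl

namespace CPAux

variable {V : Type*}

/-! ### generic distance lemmas -/

lemma dist_triangle' (G : SimpleGraph V) {u v w : V} (h1 : G.Reachable u v)
    (h2 : G.Reachable v w) : G.dist u w ≤ G.dist u v + G.dist v w := by
  obtain ⟨p, hp⟩ := h1.exists_walk_length_eq_dist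
  obtain ⟨q, hq⟩ := h2.exists_walk_length_eq_dist
  calc G.dist u w ≤ (p.append q).length := SimpleGraph.dist_le _
    _ = _ := by rw [SimpleGraph.Walk.length_append, hp, hq]

lemma dist_step (G : SimpleGraph V) {u v : V} {n : ℕ} (h : G.dist u v = n + 1) :
    ∃ w, G.Adj u w ∧ G.dist w v = n := by
  have hr : G.Reachable u v := SimpleGraph.Reachable.of_dist_ne_zero (by omega)
  obtain ⟨p, hp⟩ := hr.exists_walk_length_eq_dist
  rw [h] at hp
  cases p with
  | nil => simp at hp
  | @cons _ w _ hadj q =>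
    refine ⟨w, hadj, ?_⟩
    rw [SimpleGraph.Walk.length_cons] at hp
    have h1 : G.dist w v ≤ n := by
      have := SimpleGraph.dist_le q; omega
    obtain ⟨q', hq'⟩ := SimpleGraph.Reachable.exists_walk_length_eq_dist (⟨q⟩ : G.Reachable w v)
    have h2 : G.dist u v ≤ q'.length + 1 := by
      have := SimpleGraph.dist_le (SimpleGraph.Walk.cons hadj q')
      simpa [Nat.add_comm] using this
    omega

lemma dist_le_two (G : SimpleGraph V) {u v w : V} (h1 : G.Adj u w) (h2 : G.Adj w v) :
    G.dist u v ≤ 2 := by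
  have := SimpleGraph.dist_le (SimpleGraph.Walk.cons h1 (SimpleGraph.Walk.cons h2
    SimpleGraph.Walk.nil))
  simpa using this

lemma dist_le_three (G : SimpleGraph V) {u v w x : V} (h1 : G.Adj u w) (h2 : G.Adj w x)
    (h3 : G.Adj x v) : G.dist u v ≤ 3 := by
  have := SimpleGraph.dist_le (SimpleGraph.Walk.cons h1 (SimpleGraph.Walk.cons h2
    (SimpleGraph.Walk.cons h3 SimpleGraph.Walk.nil)))
  simpa using this

lemma exists_mid_of_dist_two (G : SimpleGraph V) {u v : V} (h : G.dist u v = 2) :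
    ∃ w, G.Adj u w ∧ G.Adj w v := by
  obtain ⟨w, hadj, hw⟩ := dist_step G (show G.dist u v = 1 + 1 by omega)
  exact ⟨w, hadj, SimpleGraph.dist_eq_one_iff_adj.mp hw⟩

lemma ne_and_not_adj_of_dist (G : SimpleGraph V) {u v : V} {k : ℕ} (h : G.dist u v = k)
    (hk : 2 ≤ k) : u ≠ v ∧ ¬ G.Adj u v := by
  constructor
  · rintro rfl; rw [SimpleGraph.dist_self] at h; omega
  · intro hadj; rw [SimpleGraph.dist_eq_one_iff_adj.mpr hadj] at h; omega

/-! ### compPrism basics -/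

lemma cp_adj_ll {G : SimpleGraph V} {u w : V} :
    (compPrism G).Adj (Sum.inl u) (Sum.inl w) ↔ G.Adj u w := Iff.rfl

lemma cp_adj_rr {G : SimpleGraph V} {u w : V} :
    (compPrism G).Adj (Sum.inr u) (Sum.inr w) ↔ u ≠ w ∧ ¬ G.Adj u w := Iff.rfl

lemma cp_adj_lr {G : SimpleGraph V} {u w : V} :
    (compPrism G).Adj (Sum.inl u) (Sum.inr w) ↔ u = w := Iff.rfl

lemma cp_adj_rl {G : SimpleGraph V} {u w : V} :
    (compPrism G).Adj (Sum.inr u) (Sum.inl w) ↔ u = w := Iff.rfl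

lemma cp_connected {G : SimpleGraph V} {a : V} (ha : ∀ w, ¬ G.Adj a w) :
    (compPrism G).Connected := by
  rw [connected_iff_exists_forall_reachable]
  refine ⟨Sum.inr a, ?_⟩
  have base : ∀ w : V, (compPrism G).Reachable (Sum.inr a) (Sum.inr w) := by
    intro w
    by_cases h : w = a
    · subst h; exact Reachable.refl _
    · exact SimpleGraph.Adj.reachable (cp_adj_rr.mpr ⟨fun e => h e.symm, ha w⟩)
  rintro (w | w)
  · exact (base w).trans (SimpleGraph.Adj.reachable (cp_adj_rl.mpr rfl))
  · exact base w

/-- the unique neighbour of the left copy of an isolated vertex -/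
lemma nbr_isolated {G : SimpleGraph V} {a : V} (ha : ∀ w, ¬ G.Adj a w) {m : V ⊕ V}
    (h : (compPrism G).Adj m (Sum.inl a)) : m = Sum.inr a := by
  cases m with
  | inl w => exact absurd (cp_adj_ll.mp h).symm (ha w)
  | inr w => rw [cp_adj_rl.mp h]

lemma nbr_isolated' {G : SimpleGraph V} {a : V} (ha : ∀ w, ¬ G.Adj a w) {m : V ⊕ V}
    (h : (compPrism G).Adj (Sum.inl a) m) : m = Sum.inr a :=
  nbr_isolated ha h.symm

/-! ### distances in the complementary prism -/

lemma cp_dist_lr_self {G : SimpleGraph V} (x : V) :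
    (compPrism G).dist (Sum.inl x) (Sum.inr x) = 1 :=
  SimpleGraph.dist_eq_one_iff_adj.mpr (cp_adj_lr.mpr rfl)

lemma cp_dist_rl {G : SimpleGraph V} {x z : V} (hxz : x ≠ z) :
    (compPrism G).dist (Sum.inr x) (Sum.inl z) = 2 := by
  have hub : (compPrism G).dist (Sum.inr x) (Sum.inl z) ≤ 2 := by
    by_cases h : G.Adj x z
    · exact dist_le_two _ (cp_adj_rl.mpr rfl) (cp_adj_ll.mpr h)
    · exact dist_le_two _ (cp_adj_rr.mpr ⟨hxz, h⟩) (cp_adj_rl.mpr rfl)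
  have h0 : (compPrism G).dist (Sum.inr x) (Sum.inl z) ≠ 0 := by
    intro h
    have := SimpleGraph.dist_eq_zero_iff_eq_or_not_reachable.mp h
    rcases this with h | h
    · exact Sum.inr_ne_inl h
    · exact h (by
        by_cases hadj : G.Adj x z
        · exact ((cp_adj_rl.mpr rfl : (compPrism G).Adj (Sum.inr x) (Sum.inl x)).reachable.trans
            (cp_adj_ll.mpr hadj).reachable : _)
        · exact ((cp_adj_rr.mpr ⟨hxz, hadj⟩ : _).reachable.trans (cp_adj_rl.mpr rfl).reachable))
  have h1 : (compPrism G).dist (Sum.inr x) (Sum.inl z) ≠ 1 := by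
    intro h
    exact hxz (cp_adj_rl.mp (SimpleGraph.dist_eq_one_iff_adj.mp h))
  omega

lemma cp_dist_lr {G : SimpleGraph V} {x z : V} (hxz : x ≠ z) :
    (compPrism G).dist (Sum.inl x) (Sum.inr z) = 2 := by
  rw [SimpleGraph.dist_comm]
  exact cp_dist_rl (Ne.symm hxz)

lemma cp_dist_ll_isolated {G : SimpleGraph V} {a z : V} (ha : ∀ w, ¬ G.Adj a w)
    (hza : z ≠ a) : (compPrism G).dist (Sum.inl a) (Sum.inl z) = 3 := by
  have hub : (compPrism G).dist (Sum.inl a) (Sum.inl z) ≤ 3 :=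
    dist_le_three _ (cp_adj_lr.mpr rfl) (cp_adj_rr.mpr ⟨fun e => hza e.symm, ha z⟩)
      (cp_adj_rl.mpr rfl)
  have h0 : (compPrism G).dist (Sum.inl a) (Sum.inl z) ≠ 0 := by
    intro h
    rcases SimpleGraph.dist_eq_zero_iff_eq_or_not_reachable.mp h with h | h
    · exact hza (Sum.inl_injective h).symm
    · exact h (((cp_adj_lr.mpr rfl : (compPrism G).Adj (Sum.inl a) (Sum.inr a)).reachable).trans
        (((cp_adj_rr.mpr ⟨fun e => hza e.symm, ha z⟩ : _).reachable).trans
          (cp_adj_rl.mpr rfl).reachable))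
  have h1 : (compPrism G).dist (Sum.inl a) (Sum.inl z) ≠ 1 := by
    intro h
    exact ha z (cp_adj_ll.mp (SimpleGraph.dist_eq_one_iff_adj.mp h))
  have h2 : (compPrism G).dist (Sum.inl a) (Sum.inl z) ≠ 2 := by
    intro h
    obtain ⟨m, hm1, hm2⟩ := exists_mid_of_dist_two _ h
    rw [nbr_isolated' ha hm1] at hm2
    exact hza (cp_adj_rl.mp hm2).symm
  omega

lemma cp_dist_rr_of_adj {G : SimpleGraph V} {a x z : V} (ha : ∀ w, ¬ G.Adj a w)
    (h : G.Adj x z) : (compPrism G).dist (Sum.inr x) (Sum.inr z) = 2 := by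
  have hxa : x ≠ a := fun e => ha z (e ▸ h)
  have hza : z ≠ a := fun e => ha x (e ▸ h.symm)
  have hub : (compPrism G).dist (Sum.inr x) (Sum.inr z) ≤ 2 :=
    dist_le_two _ (cp_adj_rr.mpr ⟨hxa, fun e => ha x e.symm⟩)
      (cp_adj_rr.mpr ⟨fun e => hza e.symm, ha z⟩)
  have h0 : (compPrism G).dist (Sum.inr x) (Sum.inr z) ≠ 0 := by
    intro hd
    rcases SimpleGraph.dist_eq_zero_iff_eq_or_not_reachable.mp hd with hd | hd
    · exact h.ne (Sum.inr_injective hd)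
    · exact hd ((cp_adj_rr.mpr ⟨hxa, fun e => ha x e.symm⟩ : _).reachable.trans
        (cp_adj_rr.mpr ⟨fun e => hza e.symm, ha z⟩).reachable)
  have h1 : (compPrism G).dist (Sum.inr x) (Sum.inr z) ≠ 1 := by
    intro hd
    exact (cp_adj_rr.mp (SimpleGraph.dist_eq_one_iff_adj.mp hd)).2 h
  omega

lemma cp_dist_ll_two {G : SimpleGraph V} {x z m : V} (hne : x ≠ z) (hnadj : ¬ G.Adj x z)
    (h1 : G.Adj x m) (h2 : G.Adj m z) :
    (compPrism G).dist (Sum.inl x) (Sum.inl z) = 2 := by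
  have hub := dist_le_two (compPrism G) (cp_adj_ll.mpr h1) (cp_adj_ll.mpr h2)
  have h0 : (compPrism G).dist (Sum.inl x) (Sum.inl z) ≠ 0 := by
    intro hd
    rcases SimpleGraph.dist_eq_zero_iff_eq_or_not_reachable.mp hd with hd | hd
    · exact hne (Sum.inl_injective hd)
    · exact hd ((cp_adj_ll.mpr h1 : _).reachable.trans (cp_adj_ll.mpr h2).reachable)
  have hd1 : (compPrism G).dist (Sum.inl x) (Sum.inl z) ≠ 1 := by
    intro hd
    exact hnadj (cp_adj_ll.mp (SimpleGraph.dist_eq_one_iff_adj.mp hd))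
  omega

lemma cp_dist_ll_three {G : SimpleGraph V} {x z : V} (hne : x ≠ z) (hnadj : ¬ G.Adj x z)
    (hnc : ¬ ∃ m, G.Adj x m ∧ G.Adj m z) :
    (compPrism G).dist (Sum.inl x) (Sum.inl z) = 3 := by
  have hub : (compPrism G).dist (Sum.inl x) (Sum.inl z) ≤ 3 :=
    dist_le_three _ (cp_adj_lr.mpr rfl) (cp_adj_rr.mpr ⟨hne, hnadj⟩) (cp_adj_rl.mpr rfl)
  have h0 : (compPrism G).dist (Sum.inl x) (Sum.inl z) ≠ 0 := by
    intro hd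
    rcases SimpleGraph.dist_eq_zero_iff_eq_or_not_reachable.mp hd with hd | hd
    · exact hne (Sum.inl_injective hd)
    · exact hd ((cp_adj_lr.mpr rfl : (compPrism G).Adj (Sum.inl x) (Sum.inr x)).reachable.trans
        (((cp_adj_rr.mpr ⟨hne, hnadj⟩ : _).reachable).trans (cp_adj_rl.mpr rfl).reachable))
  have h1 : (compPrism G).dist (Sum.inl x) (Sum.inl z) ≠ 1 := by
    intro hd
    exact hnadj (cp_adj_ll.mp (SimpleGraph.dist_eq_one_iff_adj.mp hd))
  have h2 : (compPrism G).dist (Sum.inl x) (Sum.inl z) ≠ 2 := by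
    intro hd
    obtain ⟨m, hm1, hm2⟩ := exists_mid_of_dist_two _ hd
    cases m with
    | inl w => exact hnc ⟨w, cp_adj_ll.mp hm1, cp_adj_ll.mp hm2⟩
    | inr w =>
      have := cp_adj_lr.mp hm1
      subst this
      exact hne (cp_adj_rl.mp hm2)
  omega

end CPAux

namespace CPAux
variable {V : Type*}

open SimpleGraph

/-- extract mid information from interval membership in a connected graph -/
lemma interval_cases {H : SimpleGraph V} (hc : H.Connected) {p q w : V}
    (hw : w ∈ geoInterval H p q) :
    w = p ∨ w = q ∨ (0 < H.dist p w ∧ 0 < H.dist w q ∧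
      H.dist p w + H.dist w q = H.dist p q) := by
  rcases hw with rfl | hw
  · exact Or.inl rfl
  rcases hw with rfl | ⟨hr, hsum⟩
  · exact Or.inr (Or.inl rfl)
  by_cases hp : w = p
  · exact Or.inl hp
  by_cases hq : w = q
  · exact Or.inr (Or.inl hq)
  refine Or.inr (Or.inr ⟨?_, ?_, hsum⟩)
  · have := (hc.dist_eq_zero_iff (u := p) (v := w)).not.mpr (fun e => hp e.symm)
    omega
  · have := (hc.dist_eq_zero_iff (u := w) (v := q)).not.mpr hq
    omega

/-- the complement of the left copy of an isolated vertex is convex -/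
lemma convex_compl_isolated {G : SimpleGraph V} {a : V} (ha : ∀ w, ¬ G.Adj a w)
    (hc : (compPrism G).Connected) :
    IsGeoConvex (compPrism G) {z | z ≠ Sum.inl a} := by
  intro p hp q hq w hw
  rcases interval_cases hc hw with rfl | hw'
  · exact hp
  rcases hw' with rfl | ⟨h1, h2, hsum⟩
  · exact hq
  intro hwa
  subst hwa
  set H := compPrism G
  obtain ⟨n, hn⟩ : ∃ n, H.dist p (Sum.inl a) = n + 1 := ⟨H.dist p (Sum.inl a) - 1, by omega⟩
  obtain ⟨k, hk⟩ : ∃ k, H.dist (Sum.inl a) q = k + 1 := ⟨H.dist (Sum.inl a) q - 1, by omega⟩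
  obtain ⟨m1, hm1, hm1d⟩ := dist_step H (show H.dist (Sum.inl a) p = n + 1 by
    rw [SimpleGraph.dist_comm]; exact hn)
  obtain ⟨m2, hm2, hm2d⟩ := dist_step H hk
  have e1 : m1 = Sum.inr a := nbr_isolated ha hm1.symm
  have e2 : m2 = Sum.inr a := nbr_isolated ha hm2.symm
  subst e1; subst e2
  have tri : H.dist p q ≤ H.dist p (Sum.inr a) + H.dist (Sum.inr a) q :=
    hc.dist_triangle
  rw [SimpleGraph.dist_comm] at hm1d
  omega

/-- `T = inl '' A ∪ inr '' A ∪ {inl v, inr v}` is convex, where all of `A` is isolated -/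
lemma convexT {G : SimpleGraph V} {A : Set V} (hA : ∀ a ∈ A, ∀ w, ¬ G.Adj a w) (v : V)
    (hc : (compPrism G).Connected) :
    IsGeoConvex (compPrism G)
      {z | ∃ c, (c ∈ A ∨ c = v) ∧ (z = Sum.inl c ∨ z = Sum.inr c)} := by
  set H := compPrism G with hH
  intro p hp q hq w hw
  rcases interval_cases hc hw with rfl | hw'
  · exact hp
  rcases hw' with rfl | ⟨h1, h2, hsum⟩
  · exact hq
  obtain ⟨c, hcG, hcp⟩ := hp
  obtain ⟨d, hdG, hdq⟩ := hq
  -- basic facts about good vertices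
  have hGdnadj : ∀ {c d : V}, (c ∈ A ∨ c = v) → (d ∈ A ∨ d = v) → c ≠ d → ¬ G.Adj c d := by
    rintro c d (hcA | rfl) hd hne
    · exact hA c hcA d
    · rcases hd with hdA | rfl
      · exact fun h => hA d hdA c h.symm
      · exact absurd rfl hne
  have memT : ∀ {e : V}, (e ∈ A ∨ e = v) →
      Sum.inl e ∈ {z | ∃ c, (c ∈ A ∨ c = v) ∧ (z = Sum.inl c ∨ z = Sum.inr c)} ∧
      Sum.inr e ∈ {z | ∃ c, (c ∈ A ∨ c = v) ∧ (z = Sum.inl c ∨ z = Sum.inr c)} :=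
    fun he => ⟨⟨_, he, Or.inl rfl⟩, ⟨_, he, Or.inr rfl⟩⟩
  -- now case on shapes
  rcases hcp with rfl | rfl <;> rcases hdq with rfl | rfl
  · -- p = inl c, q = inl d
    by_cases hcd : c = d
    · subst hcd
      rw [SimpleGraph.dist_self] at hsum
      omega
    have hnadj : ¬ G.Adj c d := hGdnadj hcG hdG hcd
    have hAcd : c ∈ A ∨ d ∈ A := by
      rcases hcG with h | rfl
      · exact Or.inl h
      rcases hdG with h | rfl
      · exact Or.inr h
      · exact absurd rfl hcd
    have hdist : H.dist (Sum.inl c) (Sum.inl d) = 3 := by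
      rcases hAcd with hcA | hdA
      · exact cp_dist_ll_isolated (hA c hcA) (fun e => hcd e.symm)
      · rw [SimpleGraph.dist_comm]
        exact cp_dist_ll_isolated (hA d hdA) hcd
    rw [hdist] at hsum
    have : (H.dist (Sum.inl c) w = 1 ∧ H.dist w (Sum.inl d) = 2) ∨
        (H.dist (Sum.inl c) w = 2 ∧ H.dist w (Sum.inl d) = 1) := by omega
    rcases this with ⟨ha1, ha2⟩ | ⟨ha1, ha2⟩
    · have hadj := SimpleGraph.dist_eq_one_iff_adj.mp ha1
      cases w with
      | inr e =>
        have : c = e := cp_adj_lr.mp hadj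
        subst this
        exact (memT hcG).2
      | inl e =>
        have hce : G.Adj c e := cp_adj_ll.mp hadj
        by_cases hdA : d ∈ A
        · exfalso
          have hed : e ≠ d := fun h => hnadj (h ▸ hce)
          have : H.dist (Sum.inl e) (Sum.inl d) = 3 := by
            rw [SimpleGraph.dist_comm]
            exact cp_dist_ll_isolated (hA d hdA) hed
          omega
        · exfalso
          have hcA : c ∈ A := by
            rcases hAcd with h | h
            · exact h
            · exact absurd h hdA
          exact hA c hcA e hce
    · have hadj := SimpleGraph.dist_eq_one_iff_adj.mp ha2
      cases w with
      | inr e =>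
        have : e = d := cp_adj_rl.mp hadj
        subst this
        exact (memT hdG).2
      | inl e =>
        have hed : G.Adj e d := cp_adj_ll.mp hadj
        by_cases hcA : c ∈ A
        · exfalso
          have hce : e ≠ c := fun h => hnadj (h ▸ hed)
          have : H.dist (Sum.inl c) (Sum.inl e) = 3 :=
            cp_dist_ll_isolated (hA c hcA) hce
          omega
        · exfalso
          have hdA : d ∈ A := by
            rcases hAcd with h | h
            · exact absurd h hcA
            · exact h
          exact hA d hdA e hed.symm
  · -- p = inl c, q = inr d
    by_cases hcd : c = d
    · subst hcd
      rw [cp_dist_lr_self] at hsum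
      have : H.dist (Sum.inl c) w = 0 ∨ H.dist w (Sum.inr c) = 0 := by omega
      rcases this with h | h
      · obtain rfl := (hc.dist_eq_zero_iff).mp h
        exact (memT hcG).1
      · obtain rfl := (hc.dist_eq_zero_iff).mp h
        exact (memT hcG).2
    · have hdist : H.dist (Sum.inl c) (Sum.inr d) = 2 := cp_dist_lr hcd
      rw [hdist] at hsum
      have ha1 : H.dist (Sum.inl c) w = 1 := by omega
      have ha2 : H.dist w (Sum.inr d) = 1 := by omega
      have hadj := SimpleGraph.dist_eq_one_iff_adj.mp ha1
      have hadj2 := SimpleGraph.dist_eq_one_iff_adj.mp ha2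
      cases w with
      | inr e =>
        have : c = e := cp_adj_lr.mp hadj
        subst this
        exact (memT hcG).2
      | inl e =>
        have hce : G.Adj c e := cp_adj_ll.mp hadj
        have : e = d := cp_adj_lr.mp hadj2
        subst this
        exact absurd hce (hGdnadj hcG hdG hcd)
  · -- p = inr c, q = inl d
    by_cases hcd : c = d
    · subst hcd
      rw [show H.dist (Sum.inr c) (Sum.inl c) = 1 from by
        rw [SimpleGraph.dist_comm]; exact cp_dist_lr_self c] at hsum
      have : H.dist (Sum.inr c) w = 0 ∨ H.dist w (Sum.inl c) = 0 := by omega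
      rcases this with h | h
      · obtain rfl := (hc.dist_eq_zero_iff).mp h
        exact (memT hcG).2
      · obtain rfl := (hc.dist_eq_zero_iff).mp h
        exact (memT hcG).1
    · have hdist : H.dist (Sum.inr c) (Sum.inl d) = 2 := cp_dist_rl hcd
      rw [hdist] at hsum
      have ha1 : H.dist (Sum.inr c) w = 1 := by omega
      have ha2 : H.dist w (Sum.inl d) = 1 := by omega
      have hadj := SimpleGraph.dist_eq_one_iff_adj.mp ha1
      have hadj2 := SimpleGraph.dist_eq_one_iff_adj.mp ha2
      cases w with
      | inl e =>
        have : c = e := cp_adj_rl.mp hadj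
        subst this
        exact (memT hcG).1
      | inr e =>
        have : e = d := cp_adj_rl.mp hadj2
        subst this
        exact (memT hdG).2
  · -- p = inr c, q = inr d
    by_cases hcd : c = d
    · subst hcd
      rw [SimpleGraph.dist_self] at hsum
      omega
    · have hdist : H.dist (Sum.inr c) (Sum.inr d) = 1 :=
        SimpleGraph.dist_eq_one_iff_adj.mpr (cp_adj_rr.mpr ⟨hcd, hGdnadj hcG hdG hcd⟩)
      rw [hdist] at hsum
      omega

/-- walks inside a set closed under adjacency lift to the induced graph -/
lemma induce_walk {G : SimpleGraph V} {s : Set V}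
    (hs : ∀ ⦃x y : V⦄, x ∈ s → G.Adj x y → y ∈ s) :
    ∀ {x y : V} (p : G.Walk x y) (hx : x ∈ s) (hy : y ∈ s),
      ∃ q : (G.induce s).Walk ⟨x, hx⟩ ⟨y, hy⟩, q.length = p.length := by
  intro x y p
  induction p with
  | nil =>
    intro hx hy
    exact ⟨SimpleGraph.Walk.nil.copy rfl (Subtype.ext rfl), by simp⟩
  | @cons a b c h p ih =>
    intro hx hy
    have hb : b ∈ s := hs hx h
    obtain ⟨q, hq⟩ := ih hb hy
    refine ⟨SimpleGraph.Walk.cons (by simpa using h) q, ?_⟩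
    simp [hq]

end CPAux

theorem hullNumber_compPrism_one_nontrivial_eq_diam_gt_three {V : Type*} [Fintype V]
    (G : SimpleGraph V) (t : ℕ) (hdisc : ¬ G.Connected)
    (C₁ : G.ConnectedComponent) (hC₁ : C₁.supp.Nontrivial)
    (huniq : ∀ C : G.ConnectedComponent, C.supp.Nontrivial → C = C₁)
    (ht : t = Nat.card {C : G.ConnectedComponent // ¬ C.supp.Nontrivial})
    (ht0 : 0 < t)
    (hdiam : ∃ u v : C₁.supp, 3 < (G.induce C₁.supp).dist u v) :
    hullNumber (compPrism G) = t + 2 := by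
  classical
  set A : Set V := {c | ∀ w, ¬ G.Adj c w} with hAdef
  have hAmem : ∀ c : V, c ∈ A ↔ ∀ w, ¬ G.Adj c w := fun c => Iff.rfl
  have isoReach : ∀ a ∈ A, ∀ z, G.Reachable a z → z = a := by
    intro a haA z hr
    obtain ⟨p⟩ := hr
    cases p with
    | nil => rfl
    | cons h _ => exact absurd h ((hAmem a).mp haA _)
  have iso_iff : ∀ c : V, c ∈ A ↔ ¬ (G.connectedComponentMk c).supp.Nontrivial := by
    intro c
    constructor
    · intro hiso hnt
      obtain ⟨x, hx, y, hy, hxy⟩ := hnt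
      rw [SimpleGraph.ConnectedComponent.mem_supp_iff] at hx hy
      have hx' := isoReach c hiso x (SimpleGraph.ConnectedComponent.exact hx).symm
      have hy' := isoReach c hiso y (SimpleGraph.ConnectedComponent.exact hy).symm
      exact hxy (hx'.trans hy'.symm)
    · intro hnt w hadj
      refine hnt ⟨w, ?_, c, ?_, hadj.ne'⟩
      · rw [SimpleGraph.ConnectedComponent.mem_supp_iff]
        exact SimpleGraph.ConnectedComponent.sound hadj.symm.reachable
      · rw [SimpleGraph.ConnectedComponent.mem_supp_iff]
  have mem_C_iff : ∀ c : V, c ∈ C₁.supp ↔ c ∉ A := by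
    intro c
    constructor
    · intro hcC hcA
      have := (iso_iff c).mp hcA
      rw [(SimpleGraph.ConnectedComponent.mem_supp_iff _ _).mp hcC] at this
      exact this hC₁
    · intro hcA
      rw [SimpleGraph.ConnectedComponent.mem_supp_iff]
      refine huniq _ ?_
      by_contra hnt
      exact hcA ((iso_iff c).mpr hnt)
  -- an isolated vertex
  have hAne : A.Nonempty := by
    have hpos : 0 < Nat.card {C : G.ConnectedComponent // ¬ C.supp.Nontrivial} := ht ▸ ht0
    have hne : Nonempty {C : G.ConnectedComponent // ¬ C.supp.Nontrivial} :=
      (Nat.card_pos_iff.mp hpos).1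
    obtain ⟨⟨C', hC'⟩⟩ := hne
    revert hC'
    refine SimpleGraph.ConnectedComponent.ind (fun c hC' => ?_) C'
    exact ⟨c, (iso_iff c).mpr hC'⟩
  obtain ⟨a₀, ha₀⟩ := hAne
  have ha₀' : ∀ w, ¬ G.Adj a₀ w := (hAmem a₀).mp ha₀
  have hc : (compPrism G).Connected := CPAux.cp_connected ha₀'
  -- cardinality of A
  have hcardA : A.ncard = t := by
    rw [← Nat.card_coe_set_eq, ht]
    refine Nat.card_eq_of_bijective
      (fun a => ⟨G.connectedComponentMk ↑a, (iso_iff ↑a).mp a.2⟩) ⟨?_, ?_⟩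
    · intro a b hab
      have h1 : G.connectedComponentMk ↑a = G.connectedComponentMk ↑b :=
        congrArg Subtype.val hab
      have := isoReach ↑a a.2 ↑b (SimpleGraph.ConnectedComponent.exact h1)
      exact Subtype.ext this.symm
    · rintro ⟨C, hC⟩
      revert hC
      refine SimpleGraph.ConnectedComponent.ind (fun c hC => ?_) C
      exact ⟨⟨c, (iso_iff c).mpr hC⟩, Subtype.ext rfl⟩
  -- geodesic of length 4 in G
  obtain ⟨u', v', hduv⟩ := hdiam
  have hclos : ∀ ⦃x y : V⦄, x ∈ C₁.supp → G.Adj x y → y ∈ C₁.supp := by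
    intro x y hx hxy
    rw [SimpleGraph.ConnectedComponent.mem_supp_iff] at hx ⊢
    rw [← hx]
    exact SimpleGraph.ConnectedComponent.sound hxy.symm.reachable
  have hrUV : G.Reachable ↑u' ↑v' := by
    have h1 := (SimpleGraph.ConnectedComponent.mem_supp_iff _ _).mp u'.2
    have h2 := (SimpleGraph.ConnectedComponent.mem_supp_iff _ _).mp v'.2
    exact SimpleGraph.ConnectedComponent.exact (h1.trans h2.symm)
  have hd4 : 4 ≤ G.dist ↑u' ↑v' := by
    obtain ⟨p, hp⟩ := hrUV.exists_walk_length_eq_dist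
    obtain ⟨q, hq⟩ := CPAux.induce_walk hclos p u'.2 v'.2
    have hle : (G.induce C₁.supp).dist u' v' ≤ q.length := SimpleGraph.dist_le q
    omega
  set x0 : V := ↑u' with hx0def
  set y : V := ↑v' with hydef
  obtain ⟨x1, adj01, hx1⟩ := CPAux.dist_step G
    (show G.dist x0 y = (G.dist x0 y - 1) + 1 by omega)
  obtain ⟨x2, adj12, hx2⟩ := CPAux.dist_step G
    (show G.dist x1 y = (G.dist x0 y - 2) + 1 by omega)
  obtain ⟨x3, adj23, hx3⟩ := CPAux.dist_step G
    (show G.dist x2 y = (G.dist x0 y - 3) + 1 by omega)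
  obtain ⟨x4, adj34, hx4⟩ := CPAux.dist_step G
    (show G.dist x3 y = (G.dist x0 y - 4) + 1 by omega)
  -- reachabilities
  have r02 : G.Reachable x0 x2 := adj01.reachable.trans adj12.reachable
  have r03 : G.Reachable x0 x3 := r02.trans adj23.reachable
  have r04 : G.Reachable x0 x4 := r03.trans adj34.reachable
  have r13 : G.Reachable x1 x3 := adj12.reachable.trans adj23.reachable
  have r14 : G.Reachable x1 x4 := r13.trans adj34.reachable
  have r2y : G.Reachable x2 y := r02.symm.trans hrUV
  have r3y : G.Reachable x3 y := r03.symm.trans hrUV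
  have r4y : G.Reachable x4 y := r04.symm.trans hrUV
  -- exact pairwise distances
  have e02 : G.dist x0 x2 = 2 := by
    have hub := CPAux.dist_le_two G adj01 adj12
    have htr := CPAux.dist_triangle' G r02 r2y
    omega
  have e13 : G.dist x1 x3 = 2 := by
    have hub := CPAux.dist_le_two G adj12 adj23
    have htr := CPAux.dist_triangle' G r13 r3y
    omega
  have e03 : G.dist x0 x3 = 3 := by
    have hub := CPAux.dist_le_three G adj01 adj12 adj23
    have htr := CPAux.dist_triangle' G r03 r3y
    omega
  have e04 : G.dist x0 x4 = 4 := by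
    have hub : G.dist x0 x4 ≤ 4 := by
      have := SimpleGraph.dist_le (SimpleGraph.Walk.cons adj01 (SimpleGraph.Walk.cons adj12
        (SimpleGraph.Walk.cons adj23 (SimpleGraph.Walk.cons adj34 SimpleGraph.Walk.nil))))
      simpa using this
    have htr := CPAux.dist_triangle' G r04 r4y
    omega
  have e14 : G.dist x1 x4 = 3 := by
    have hub := CPAux.dist_le_three G adj12 adj23 adj34
    have htr := CPAux.dist_triangle' G r14 r4y
    omega
  obtain ⟨ne02, nadj02⟩ := CPAux.ne_and_not_adj_of_dist G e02 (by omega)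
  obtain ⟨ne13, nadj13⟩ := CPAux.ne_and_not_adj_of_dist G e13 (by omega)
  obtain ⟨ne03, nadj03⟩ := CPAux.ne_and_not_adj_of_dist G e03 (by omega)
  obtain ⟨ne04, nadj04⟩ := CPAux.ne_and_not_adj_of_dist G e04 (by omega)
  obtain ⟨ne14, nadj14⟩ := CPAux.ne_and_not_adj_of_dist G e14 (by omega)
  have hnc03 : ¬ ∃ m, G.Adj x0 m ∧ G.Adj m x3 := by
    rintro ⟨m, h1, h2⟩
    have := CPAux.dist_le_two G h1 h2
    omega
  -- the x's are not isolated
  have hx0A : x0 ∉ A := fun h => (hAmem x0).mp h x1 adj01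
  have hx1A : x1 ∉ A := fun h => (hAmem x1).mp h x2 adj12
  have hx2A : x2 ∉ A := fun h => (hAmem x2).mp h x3 adj23
  have hx3A : x3 ∉ A := fun h => (hAmem x3).mp h x4 adj34
  have hx4A : x4 ∉ A := fun h => (hAmem x4).mp h x3 adj34.symm
  ------------------------------------------------------------------
  -- UPPER BOUND : S₀ is a hull set of size t+2
  ------------------------------------------------------------------
  set S₀ : Set (V ⊕ V) := (Sum.inl '' A) ∪ {Sum.inl x0, Sum.inl x3} with hS₀def
  set K : Set (V ⊕ V) := geoHull (compPrism G) S₀ with hKdef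
  have hKconv : IsGeoConvex (compPrism G) K := by
    intro p hp q hq w hw
    refine Set.mem_sInter.mpr (fun T hT => ?_)
    exact hT.1 p (Set.mem_sInter.mp hp T hT) q (Set.mem_sInter.mp hq T hT) hw
  have hSK : S₀ ⊆ K := fun z hz => Set.mem_sInter.mpr (fun T hT => hT.2 hz)
  have between : ∀ {p q w : V ⊕ V}, p ∈ K → q ∈ K →
      (compPrism G).dist p w + (compPrism G).dist w q = (compPrism G).dist p q → w ∈ K := by
    intro p q w hp hq hsum
    exact hKconv p hp q hq (Or.inr (Or.inr ⟨hc.preconnected p q, hsum⟩))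
  have mLA : ∀ a ∈ A, Sum.inl a ∈ K := fun a haA => hSK (Or.inl ⟨a, haA, rfl⟩)
  have mL0 : Sum.inl x0 ∈ K := hSK (Or.inr (by simp))
  have mL3 : Sum.inl x3 ∈ K := hSK (Or.inr (by simp))
  have mRA : ∀ a ∈ A, Sum.inr a ∈ K := by
    intro a haA
    have hax : a ≠ x0 := fun e => hx0A (e ▸ haA)
    apply between (mLA a haA) mL0
    rw [CPAux.cp_dist_lr_self, CPAux.cp_dist_rl hax,
      CPAux.cp_dist_ll_isolated ((hAmem a).mp haA) (Ne.symm hax)]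
  have mR_of_mL : ∀ x : V, x ≠ a₀ → Sum.inl x ∈ K → Sum.inr x ∈ K := by
    intro x hxa hLx
    apply between hLx (mLA a₀ ha₀)
    have h3 : (compPrism G).dist (Sum.inl x) (Sum.inl a₀) = 3 := by
      rw [SimpleGraph.dist_comm]
      exact CPAux.cp_dist_ll_isolated ha₀' hxa
    rw [CPAux.cp_dist_lr_self, CPAux.cp_dist_rl hxa, h3]
  have hx0a : x0 ≠ a₀ := fun e => hx0A (e ▸ ha₀)
  have hx1a : x1 ≠ a₀ := fun e => hx1A (e ▸ ha₀)
  have hx2a : x2 ≠ a₀ := fun e => hx2A (e ▸ ha₀)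
  have hx3a : x3 ≠ a₀ := fun e => hx3A (e ▸ ha₀)
  have mR0 : Sum.inr x0 ∈ K := mR_of_mL x0 hx0a mL0
  have mR3 : Sum.inr x3 ∈ K := mR_of_mL x3 hx3a mL3
  have h03 : (compPrism G).dist (Sum.inl x0) (Sum.inl x3) = 3 :=
    CPAux.cp_dist_ll_three ne03 nadj03 hnc03
  have mL1 : Sum.inl x1 ∈ K := by
    apply between mL0 mL3
    rw [h03, SimpleGraph.dist_eq_one_iff_adj.mpr (CPAux.cp_adj_ll.mpr adj01),
      CPAux.cp_dist_ll_two ne13 nadj13 adj12 adj23]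
  have mL2 : Sum.inl x2 ∈ K := by
    apply between mL0 mL3
    rw [h03, CPAux.cp_dist_ll_two ne02 nadj02 adj01 adj12,
      SimpleGraph.dist_eq_one_iff_adj.mpr (CPAux.cp_adj_ll.mpr adj23)]
  have mR1 : Sum.inr x1 ∈ K := mR_of_mL x1 hx1a mL1
  have mR2 : Sum.inr x2 ∈ K := mR_of_mL x2 hx2a mL2
  have mR4 : Sum.inr x4 ∈ K := by
    apply between mR0 mR1
    rw [CPAux.cp_dist_rr_of_adj ha₀' adj01,
      SimpleGraph.dist_eq_one_iff_adj.mpr (CPAux.cp_adj_rr.mpr ⟨ne04, nadj04⟩),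
      SimpleGraph.dist_eq_one_iff_adj.mpr (CPAux.cp_adj_rr.mpr
        ⟨Ne.symm ne14, fun h => nadj14 h.symm⟩)]
  have mL4 : Sum.inl x4 ∈ K := by
    apply between mR4 mL3
    rw [SimpleGraph.dist_eq_one_iff_adj.mpr (CPAux.cp_adj_rl.mpr rfl),
      SimpleGraph.dist_eq_one_iff_adj.mpr (CPAux.cp_adj_ll.mpr adj34.symm),
      CPAux.cp_dist_rl adj34.ne']
  -- all the right vertices are in the hull
  have mR_all : ∀ c : V, Sum.inr c ∈ K := by
    intro c
    by_cases hcA : c ∈ A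
    · exact mRA c hcA
    by_cases h0 : c = x0
    · exact h0 ▸ mR0
    by_cases h1 : c = x1
    · exact h1 ▸ mR1
    by_cases h2 : c = x2
    · exact h2 ▸ mR2
    by_cases h3 : c = x3
    · exact h3 ▸ mR3
    by_cases h4 : c = x4
    · exact h4 ▸ mR4
    have pairRule : ∀ (p q : V), Sum.inr p ∈ K → Sum.inr q ∈ K → G.Adj p q →
        c ≠ p → c ≠ q → ¬ G.Adj c p → ¬ G.Adj c q → Sum.inr c ∈ K := by
      intro p q hp hq hpq hcp hcq hacp hacq
      apply between hp hq
      rw [CPAux.cp_dist_rr_of_adj ha₀' hpq,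
        SimpleGraph.dist_eq_one_iff_adj.mpr (CPAux.cp_adj_rr.mpr
          ⟨fun e => hcp e.symm, fun h => hacp h.symm⟩),
        SimpleGraph.dist_eq_one_iff_adj.mpr (CPAux.cp_adj_rr.mpr ⟨hcq, hacq⟩)]
    by_cases hN0 : G.Adj c x0 <;> by_cases hN4 : G.Adj c x4
    · exfalso
      have := CPAux.dist_le_two G hN0.symm hN4
      omega
    · have hN3 : ¬ G.Adj c x3 := by
        intro h
        have := CPAux.dist_le_two G hN0.symm h
        omega
      exact pairRule x3 x4 mR3 mR4 adj34 h3 h4 hN3 hN4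
    · have hN1 : ¬ G.Adj c x1 := by
        intro h
        have := CPAux.dist_le_two G h.symm hN4
        omega
      exact pairRule x0 x1 mR0 mR1 adj01 h0 h1 hN0 hN1
    · by_cases hN1 : G.Adj c x1
      · by_cases hN3 : G.Adj c x3
        · have hLc : Sum.inl c ∈ K := by
            apply between mL1 mL3
            rw [CPAux.cp_dist_ll_two ne13 nadj13 adj12 adj23,
              SimpleGraph.dist_eq_one_iff_adj.mpr (CPAux.cp_adj_ll.mpr hN1.symm),
              SimpleGraph.dist_eq_one_iff_adj.mpr (CPAux.cp_adj_ll.mpr hN3)]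
          exact mR_of_mL c (fun e => hcA (e ▸ ha₀)) hLc
        · exact pairRule x3 x4 mR3 mR4 adj34 h3 h4 hN3 hN4
      · exact pairRule x0 x1 mR0 mR1 adj01 h0 h1 hN0 hN1
  -- all the left vertices are in the hull
  have stepL : ∀ {p q : V}, G.Adj p q → Sum.inl p ∈ K → Sum.inl q ∈ K := by
    intro p q hpq hp
    apply between (mR_all q) hp
    rw [SimpleGraph.dist_eq_one_iff_adj.mpr (CPAux.cp_adj_rl.mpr rfl),
      SimpleGraph.dist_eq_one_iff_adj.mpr (CPAux.cp_adj_ll.mpr hpq.symm),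
      CPAux.cp_dist_rl hpq.ne']
  have walkL : ∀ {p q : V} (w : G.Walk p q), Sum.inl p ∈ K → Sum.inl q ∈ K := by
    intro p q w
    induction w with
    | nil => exact id
    | cons h _ ih => exact fun hp => ih (stepL h hp)
  have mL_all : ∀ c : V, Sum.inl c ∈ K := by
    intro c
    by_cases hcA : c ∈ A
    · exact mLA c hcA
    · have hcC : c ∈ C₁.supp := (mem_C_iff c).mpr hcA
      have hr : G.Reachable x0 c := by
        have h1 := (SimpleGraph.ConnectedComponent.mem_supp_iff _ _).mp u'.2
        have h2 := (SimpleGraph.ConnectedComponent.mem_supp_iff _ _).mp hcC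
        exact SimpleGraph.ConnectedComponent.exact (h1.trans h2.symm)
      obtain ⟨w⟩ := hr
      exact walkL w mL0
  have hHull : IsHullSet (compPrism G) S₀ := by
    apply Set.eq_univ_of_forall
    rintro (c | c)
    · exact mL_all c
    · exact mR_all c
  have hS₀card : S₀.ncard = t + 2 := by
    have h3' : Sum.inl x3 ∉ (Sum.inl '' A : Set (V ⊕ V)) := by
      rintro ⟨a, haA, he⟩
      exact hx3A ((Sum.inl_injective he) ▸ haA)
    have h0' : Sum.inl x0 ∉ insert (Sum.inl x3) (Sum.inl '' A : Set (V ⊕ V)) := by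
      intro h
      rcases Set.mem_insert_iff.mp h with he | ⟨a, haA, he⟩
      · exact ne03 (Sum.inl_injective he)
      · exact hx0A ((Sum.inl_injective he) ▸ haA)
    have hrw : S₀ = insert (Sum.inl x0) (insert (Sum.inl x3) (Sum.inl '' A : Set (V ⊕ V))) := by
      rw [hS₀def]
      ext z
      simp only [Set.mem_union, Set.mem_insert_iff, Set.mem_singleton_iff]
      tauto
    rw [hrw, Set.ncard_insert_of_notMem h0' (Set.toFinite _),
      Set.ncard_insert_of_notMem h3' (Set.toFinite _),
      Set.ncard_image_of_injective _ Sum.inl_injective, hcardA]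
  have hmem : t + 2 ∈ {n | ∃ S : Set (V ⊕ V), S.ncard = n ∧ IsHullSet (compPrism G) S} :=
    ⟨S₀, hS₀card, hHull⟩
  ------------------------------------------------------------------
  -- LOWER BOUND
  ------------------------------------------------------------------
  have hlow : ∀ n ∈ {n | ∃ S : Set (V ⊕ V), S.ncard = n ∧ IsHullSet (compPrism G) S},
      t + 2 ≤ n := by
    rintro n ⟨S, hScard, hShull⟩
    by_contra hlt
    push_neg at hlt
    have hDS : ∀ a ∈ A, Sum.inl a ∈ S := by
      intro a haA
      by_contra hnot
      have hsub : S ⊆ {z | z ≠ Sum.inl a} := by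
        intro z hz he
        exact hnot (he ▸ hz)
      have hsubhull : geoHull (compPrism G) S ⊆ {z | z ≠ Sum.inl a} :=
        Set.sInter_subset_of_mem ⟨CPAux.convex_compl_isolated ((hAmem a).mp haA) hc, hsub⟩
      rw [hShull] at hsubhull
      exact (hsubhull (Set.mem_univ (Sum.inl a))) rfl
    have hDsub : (Sum.inl '' A : Set (V ⊕ V)) ⊆ S := by
      rintro z ⟨a, haA, rfl⟩
      exact hDS a haA
    have hDcard : (Sum.inl '' A : Set (V ⊕ V)).ncard = t := by
      rw [Set.ncard_image_of_injective _ Sum.inl_injective, hcardA]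
    have hdiffcard : (S \ (Sum.inl '' A)).ncard ≤ 1 := by
      rw [Set.ncard_diff hDsub (Set.toFinite _)]
      omega
    obtain ⟨xE, hxE⟩ : ∃ x : V ⊕ V, S ⊆ (Sum.inl '' A) ∪ {x} := by
      rcases Set.eq_empty_or_nonempty (S \ (Sum.inl '' A)) with hE | hE
      · refine ⟨Sum.inl x0, fun z hz => ?_⟩
        by_cases hzD : z ∈ (Sum.inl '' A : Set (V ⊕ V))
        · exact Or.inl hzD
        · exact absurd (show z ∈ S \ (Sum.inl '' A) from ⟨hz, hzD⟩) (by rw [hE]; simp)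
      · obtain ⟨x, hx⟩ := hE
        refine ⟨x, fun z hz => ?_⟩
        by_cases hzD : z ∈ (Sum.inl '' A : Set (V ⊕ V))
        · exact Or.inl hzD
        · right
          exact (Set.ncard_le_one_iff (Set.toFinite _)).mp hdiffcard ⟨hz, hzD⟩ hx
    have hxEforms : xE = Sum.inl (Sum.elim id id xE) ∨ xE = Sum.inr (Sum.elim id id xE) := by
      cases xE with
      | inl c => exact Or.inl rfl
      | inr c => exact Or.inr rfl
    have hST : S ⊆ {z : V ⊕ V |
        ∃ c, (c ∈ A ∨ c = Sum.elim id id xE) ∧ (z = Sum.inl c ∨ z = Sum.inr c)} := by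
      intro z hz
      rcases hxE hz with ⟨a, haA, rfl⟩ | hz1
      · exact ⟨a, Or.inl haA, Or.inl rfl⟩
      · have hzx : z = xE := hz1
        subst hzx
        rcases hxEforms with he | he
        · exact ⟨Sum.elim id id z, Or.inr rfl, Or.inl he⟩
        · exact ⟨Sum.elim id id z, Or.inr rfl, Or.inr he⟩
    have hhullT : geoHull (compPrism G) S ⊆ {z : V ⊕ V |
        ∃ c, (c ∈ A ∨ c = Sum.elim id id xE) ∧ (z = Sum.inl c ∨ z = Sum.inr c)} :=
      Set.sInter_subset_of_mem
        ⟨CPAux.convexT (fun a ha => (hAmem a).mp ha) (Sum.elim id id xE) hc, hST⟩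
    rw [hShull] at hhullT
    obtain ⟨c1, hc1, c2, hc2, hcne⟩ := hC₁
    obtain ⟨c, hcC, hcv⟩ : ∃ c, c ∈ C₁.supp ∧ c ≠ Sum.elim id id xE := by
      by_cases hsel : c1 = Sum.elim id id xE
      · exact ⟨c2, hc2, fun h => hcne (hsel.trans h.symm)⟩
      · exact ⟨c1, hc1, hsel⟩
    have hcA : c ∉ A := (mem_C_iff c).mp hcC
    obtain ⟨e, heG, he⟩ := hhullT (Set.mem_univ (Sum.inl c))
    rcases he with he | he
    · obtain rfl : c = e := Sum.inl_injective he
      rcases heG with h | h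
      · exact hcA h
      · exact hcv h
    · exact Sum.inl_ne_inr he
  exact le_antisymm (Nat.sInf_le hmem) (le_csInf ⟨_, hmem⟩ hlow)
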